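/- Suppose a share s is self-maximizing for a class C of valuations. Then the share guarantee of s is 1-Lipschitz: for every δ > 0 and v, v' ∈ C such that |v(S) − v'(S)| ≤ δ for every S ⊆ M, the share guarantee of v' is at most the share guarantee of v plus δ. -/
import Mathlib


/-- If a share `s` is self-maximizing for a class `C` of valuations, then its share
guarantee is 1-Lipschitz: if `|v(S) − v'(S)| ≤ δ` for every bundle `S`, then the share
guarantee of `v'` is at most the share guarantee of `v` plus `δ`. -/
theorem selfmax_implies_one_lipschitz {M : Type*} [Fintype M] [DecidableEq M]
    (C : Set ((Finset M) → ℝ)) (s : ((Finset M) → ℝ) → ℝ)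
    (hnonneg : ∀ v ∈ C, ∀ S : Finset M, 0 ≤ v S)
    (hreal : ∀ v ∈ C, ∃ S : Finset M, s v ≤ v S)
    (hSM : ∀ v ∈ C, ∀ v' ∈ C,
      sInf (v '' {S : Finset M | s v' ≤ v' S}) ≤ sInf (v '' {S : Finset M | s v ≤ v S}))
    (δ : ℝ) (hδ : 0 < δ)
    (v : (Finset M) → ℝ) (hv : v ∈ C) (v' : (Finset M) → ℝ) (hv' : v' ∈ C)
    (hclose : ∀ S : Finset M, |v S - v' S| ≤ δ) :
    sInf (v' '' {S : Finset M | s v' ≤ v' S})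
      ≤ sInf (v '' {S : Finset M | s v ≤ v S}) + δ := by
  set A' : Set (Finset M) := {S : Finset M | s v' ≤ v' S} with hA'
  obtain ⟨S0, hS0⟩ := hreal v' hv'
  have hA'ne : A'.Nonempty := ⟨S0, hS0⟩
  have hTfin : (v '' A').Finite := Set.toFinite _
  have hTne : (v '' A').Nonempty := hA'ne.image v
  have hmem : sInf (v '' A') ∈ v '' A' := hTne.csInf_mem hTfin
  obtain ⟨S1, hS1A, hS1eq⟩ := hmem
  have h1 : sInf (v' '' A') ≤ v' S1 :=
    csInf_le (Set.Finite.bddBelow (Set.toFinite _)) ⟨S1, hS1A, rfl⟩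
  have h2 : v' S1 ≤ v S1 + δ := by
    have := abs_le.mp (hclose S1)
    linarith [this.1]
  calc sInf (v' '' A') ≤ v S1 + δ := le_trans h1 h2
    _ = sInf (v '' A') + δ := by rw [hS1eq]
    _ ≤ sInf (v '' {S : Finset M | s v ≤ v S}) + δ := by
        linarith [hSM v hv v' hv']
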